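/- Let n,r ≥ 1 and k = |S_{n,r}|. For a finite abelian group G of order k and a surjective group homomorphism φ : ℤ^n → G, one has π(n,G,φ) = f(n,k) if and only if the restriction of φ to S_{n,r} is a bijection onto G. -/

import Mathlib

open Set

/-- The Lee (Manhattan) distance between two words in `ℤ^n`. -/
def leeDist {n : ℕ} (v w : Fin n → ℤ) : ℕ := ∑ i, (v i - w i).natAbs

/-- The Lee sphere `S_{n,r}` of radius `r` centered at the origin. -/
def leeSphere (n r : ℕ) : Set (Fin n → ℤ) := {x | leeDist x 0 ≤ r}

/-- `|S_{n,r}|`, the cardinality of the Lee sphere. -/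
noncomputable def sphereCard (n r : ℕ) : ℕ := (leeSphere n r).ncard

/-- `π(n,G,φ,g)`: the minimum Lee distance from the origin of a preimage of `g` under `φ`. -/
noncomputable def piMinDist {n : ℕ} {G : Type*} [AddCommGroup G]
    (φ : (Fin n → ℤ) →+ G) (g : G) : ℕ :=
  sInf {d | ∃ x : Fin n → ℤ, φ x = g ∧ leeDist x 0 = d}

/-- `π(n,G,φ) = ∑_{g ∈ G} π(n,G,φ,g)`. -/
noncomputable def piEmbed {n : ℕ} {G : Type*} [AddCommGroup G] [Fintype G]
    (φ : (Fin n → ℤ) →+ G) : ℕ :=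
  ∑ g : G, piMinDist φ g

/-- `f(n,k) = ∑_{i=1}^r i(|S_{n,i}| − |S_{n,i−1}|) + (r+1)(k − |S_{n,r}|)`,
where `r` is the unique integer with `|S_{n,r}| ≤ k < |S_{n,r+1}|`. -/
noncomputable def fnk (n k r : ℕ) : ℕ :=
  (∑ i ∈ Finset.Icc 1 r, i * (sphereCard n i - sphereCard n (i - 1)))
    + (r + 1) * (k - sphereCard n r)

lemma leeSphere_finite (n i : ℕ) : (leeSphere n i).Finite := by
  apply Set.Finite.subset (Set.Finite.pi (fun _ : Fin n => Set.finite_Icc (-(i:ℤ)) i))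
  intro x hx
  simp only [Set.mem_pi, Set.mem_univ, forall_true_left, Set.mem_Icc]
  intro j
  have h1 : (x j - 0).natAbs ≤ leeDist x 0 := by
    unfold leeDist
    exact Finset.single_le_sum (f := fun i => (x i - 0).natAbs)
      (fun i _ => Nat.zero_le _) (Finset.mem_univ j)
  have h2 : leeDist x 0 ≤ i := hx
  omega

lemma leeSphere_mono (n : ℕ) {i j : ℕ} (h : i ≤ j) : leeSphere n i ⊆ leeSphere n j :=
  fun x hx => le_trans hx h

lemma sphereCard_mono (n : ℕ) : Monotone (sphereCard n) :=
  fun i j h => Set.ncard_le_ncard (leeSphere_mono n h) (leeSphere_finite n j)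

lemma piMinDist_le_iff {n : ℕ} {G : Type*} [AddCommGroup G] (φ : (Fin n → ℤ) →+ G)
    (hφ : Function.Surjective φ) (g : G) (i : ℕ) :
    piMinDist φ g ≤ i ↔ g ∈ φ '' leeSphere n i := by
  obtain ⟨x0, hx0⟩ := hφ g
  have hne : {d | ∃ x : Fin n → ℤ, φ x = g ∧ leeDist x 0 = d}.Nonempty :=
    ⟨leeDist x0 0, x0, hx0, rfl⟩
  constructor
  · intro h
    obtain ⟨x, hx, hd⟩ := Nat.sInf_mem hne
    exact hx ▸ Set.mem_image_of_mem φ (show leeDist x 0 ≤ i from hd.le.trans h)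
  · rintro ⟨x, hx, rfl⟩
    have hm : leeDist x 0 ∈ {d | ∃ x' : Fin n → ℤ, φ x' = φ x ∧ leeDist x' 0 = d} :=
      ⟨x, rfl, rfl⟩
    exact (Nat.sInf_le hm).trans hx

lemma sum_eq_layers {G : Type*} [Fintype G] (f : G → ℕ) (M : ℕ) (hM : ∀ g, f g ≤ M) :
    ∑ g : G, f g = ∑ i ∈ Finset.range M, (Finset.univ.filter (fun g => i < f g)).card := by
  classical
  have h1 : ∀ g : G, f g = ((Finset.range M).filter (fun i => i < f g)).card := by
    intro g
    have : (Finset.range M).filter (fun i => i < f g) = Finset.range (f g) := by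
      ext i
      simp only [Finset.mem_filter, Finset.mem_range]
      have := hM g; omega
    rw [this, Finset.card_range]
  rw [Finset.sum_congr rfl (fun g _ => h1 g)]
  simp only [Finset.card_filter]
  exact Finset.sum_comm

lemma fnk_eq (n r : ℕ) :
    fnk n (sphereCard n r) r = ∑ i ∈ Finset.range r, (sphereCard n r - sphereCard n i) := by
  unfold fnk
  rw [Nat.sub_self, Nat.mul_zero, Nat.add_zero]
  induction r with
  | zero => simp
  | succ m ih =>
    rw [Finset.sum_Icc_succ_top (by omega), ih, Finset.sum_range_succ]
    have hterm : ∀ i ∈ Finset.range m, sphereCard n (m+1) - sphereCard n i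
        = (sphereCard n m - sphereCard n i) + (sphereCard n (m+1) - sphereCard n m) := by
      intro i hi
      have h1 := sphereCard_mono n (show i ≤ m from (Finset.mem_range.mp hi).le)
      have h2 : sphereCard n m ≤ sphereCard n (m+1) := sphereCard_mono n (Nat.le_succ m)
      omega
    rw [Finset.sum_congr rfl hterm, Finset.sum_add_distrib, Finset.sum_const,
      Finset.card_range, Nat.add_sub_cancel, smul_eq_mul]
    ring

theorem embedding_number_eq_iff_bijOn
    (n r : ℕ) (hn : 1 ≤ n) (hr : 1 ≤ r)
    (k : ℕ) (hk : k = sphereCard n r)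
    (G : Type) [AddCommGroup G] [Fintype G] (hG : Nat.card G = k)
    (φ : (Fin n → ℤ) →+ G) (hφ : Function.Surjective φ) :
    piEmbed φ = fnk n k r ↔ Set.BijOn φ (leeSphere n r) Set.univ := by
  classical
  set t : ℕ → ℕ := fun i => (φ '' leeSphere n i).ncard with ht
  have htle : ∀ i, t i ≤ sphereCard n i := fun i =>
    Set.ncard_image_le (leeSphere_finite n i)
  have htk : ∀ i, t i ≤ k := fun i => by
    rw [← hG, ← Set.ncard_univ]
    exact Set.ncard_le_ncard (Set.subset_univ _) Set.finite_univ
  set M : ℕ := r + 1 + Finset.univ.sup (piMinDist φ) with hM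
  have hMle : ∀ g : G, piMinDist φ g ≤ M :=
    fun g => le_trans (Finset.le_sup (Finset.mem_univ g)) (by omega)
  have hfilter : ∀ i, (Finset.univ.filter (fun g => i < piMinDist φ g)).card = k - t i := by
    intro i
    have hc : ∀ g ∈ Finset.univ, (i < piMinDist φ g ↔ g ∉ φ '' leeSphere n i) := by
      intro g _
      rw [← piMinDist_le_iff φ hφ g i]
      omega
    rw [Finset.filter_congr hc]
    have hTi : (φ '' leeSphere n i)
        = ↑(Finset.univ.filter (fun g => g ∈ φ '' leeSphere n i)) := by
      ext g; simp
    have hcardP : (Finset.univ.filter (fun g => g ∈ φ '' leeSphere n i)).card = t i := by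
      show _ = (⇑φ '' leeSphere n i).ncard
      conv_rhs => rw [hTi]
      rw [Set.ncard_coe_finset]
    have hsum := Finset.card_filter_add_card_filter_not
      (s := (Finset.univ : Finset G)) (p := fun g => g ∈ φ '' leeSphere n i)
    rw [Finset.card_univ, ← Nat.card_eq_fintype_card, hG, hcardP] at hsum
    omega
  have hpi : piEmbed φ = ∑ i ∈ Finset.range M, (k - t i) := by
    rw [piEmbed, sum_eq_layers (piMinDist φ) M hMle]
    exact Finset.sum_congr rfl (fun i _ => hfilter i)
  have hsplit : ∑ i ∈ Finset.range M, (k - t i)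
      = ∑ i ∈ Finset.range r, (k - t i) + ∑ i ∈ Finset.Ico r M, (k - t i) := by
    rw [Finset.range_eq_Ico, Finset.range_eq_Ico]
    exact (Finset.sum_Ico_consecutive (fun i => k - t i) (k := M) (Nat.zero_le r) (by omega)).symm
  have hf : fnk n k r = ∑ i ∈ Finset.range r, (k - sphereCard n i) := by
    rw [hk, fnk_eq n r]
  have hAge : ∑ i ∈ Finset.range r, (k - sphereCard n i) ≤ ∑ i ∈ Finset.range r, (k - t i) := by
    apply Finset.sum_le_sum
    intro i _
    exact Nat.sub_le_sub_left (htle i) k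
  constructor
  · intro h
    rw [hpi, hsplit, hf] at h
    have hB0 : ∑ i ∈ Finset.Ico r M, (k - t i) = 0 := by omega
    have hrterm : k - t r = 0 :=
      Finset.sum_eq_zero_iff.mp hB0 r (Finset.mem_Ico.mpr ⟨le_refl r, by omega⟩)
    have htr : t r = k := le_antisymm (htk r) (by omega)
    have hTr : φ '' leeSphere n r = Set.univ := by
      apply Set.eq_of_subset_of_ncard_le (Set.subset_univ _)
      rw [Set.ncard_univ, hG, ← htr]
    refine ⟨fun x _ => Set.mem_univ _, ?_, ?_⟩
    · apply Set.injOn_of_ncard_image_eq _ (leeSphere_finite n r)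
      show t r = (leeSphere n r).ncard
      rw [htr, hk]; rfl
    · exact fun g _ => hTr ▸ Set.mem_univ g
  · intro hb
    have hTr : φ '' leeSphere n r = Set.univ :=
      Set.Subset.antisymm (Set.subset_univ _) (hb.surjOn)
    have hB0 : ∑ i ∈ Finset.Ico r M, (k - t i) = 0 := by
      apply Finset.sum_eq_zero
      intro i hi
      have hsub : φ '' leeSphere n r ⊆ φ '' leeSphere n i :=
        Set.image_mono (leeSphere_mono n (Finset.mem_Ico.mp hi).1)
      have : k ≤ t i := by
        rw [← hG, ← Set.ncard_univ, ← hTr, ht]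
        exact Set.ncard_le_ncard hsub ((leeSphere_finite n i).image φ)
      omega
    have hA : ∑ i ∈ Finset.range r, (k - t i)
        = ∑ i ∈ Finset.range r, (k - sphereCard n i) := by
      apply Finset.sum_congr rfl
      intro i hi
      have hinj : Set.InjOn φ (leeSphere n i) :=
        hb.injOn.mono (leeSphere_mono n (Finset.mem_range.mp hi).le)
      show k - (⇑φ '' leeSphere n i).ncard = _
      rw [Set.ncard_image_of_injOn hinj]
      rfl
    rw [hpi, hsplit, hf, hA, hB0, Nat.add_zero]
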